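/- Let n ≥ 2, let S ⊂ ℝ^n be a Borel set with H^{n-1}(S) > 0, let R ∈ SO(n) and c ∈ ℝ^n. If Rx − x = c for every x ∈ S, then R = Id and c = 0. -/

import Mathlib

open MeasureTheory Filter Matrix
open scoped RealInnerProductSpace ENNReal NNReal

noncomputable def frobSq {n : ℕ} (X : Matrix (Fin n) (Fin n) ℝ) : ℝ := ∑ i, ∑ j, (X i j)^2
noncomputable def frob {n : ℕ} (X : Matrix (Fin n) (Fin n) ℝ) : ℝ := Real.sqrt (frobSq X)
noncomputable def msym {n : ℕ} (X : Matrix (Fin n) (Fin n) ℝ) : Matrix (Fin n) (Fin n) ℝ :=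
  (1/2 : ℝ) • (X + Xᵀ)
noncomputable def mdev {n : ℕ} (X : Matrix (Fin n) (Fin n) ℝ) : Matrix (Fin n) (Fin n) ℝ :=
  X - (X.trace / n) • (1 : Matrix (Fin n) (Fin n) ℝ)
noncomputable def mils {n : ℕ} (X : Matrix (Fin n) (Fin n) ℝ) : Matrix (Fin n) (Fin n) ℝ :=
  msym X - (X.trace / n) • (1 : Matrix (Fin n) (Fin n) ℝ)

/-- Matrix exponential, defined by its power series. -/
noncomputable def mexp {n : ℕ} (A : Matrix (Fin n) (Fin n) ℝ) : Matrix (Fin n) (Fin n) ℝ :=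
  ∑' k : ℕ, ((k.factorial : ℝ)⁻¹) • A ^ k

/-- The eigenvalues of a symmetric real matrix, listed in ascending order
(and junk value `0` if the matrix is not symmetric). -/
noncomputable def sortedEig {n : ℕ} (A : Matrix (Fin n) (Fin n) ℝ) : Fin n → ℝ :=
  if hA : A.IsHermitian then fun i => hA.eigenvalues (Tuple.sort hA.eigenvalues i) else 0

/-- The singular values of a real square matrix in ascending order. -/
noncomputable def singVals {n : ℕ} (X : Matrix (Fin n) (Fin n) ℝ) : Fin n → ℝ :=
  fun i => Real.sqrt (sortedEig (Xᵀ * X) i)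

/-- The Jacobian matrix of a map `ℝ^n → ℝ^n`. -/
noncomputable def jac {n : ℕ} (u : EuclideanSpace ℝ (Fin n) → EuclideanSpace ℝ (Fin n))
    (x : EuclideanSpace ℝ (Fin n)) : Matrix (Fin n) (Fin n) ℝ :=
  fun i j => fderiv ℝ u x (EuclideanSpace.single j 1) i

/-- A rotation that acts as a fixed translation on a set of positive `H^{n-1}` measure
is the identity (and the translation vanishes). -/
theorem stmt1 (n : ℕ) (hn : 2 ≤ n) (S : Set (EuclideanSpace ℝ (Fin n)))
    (hSm : MeasurableSet S) (h0 : 0 < μH[(n : ℝ) - 1] S)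
    (R : Matrix (Fin n) (Fin n) ℝ) (c : EuclideanSpace ℝ (Fin n))
    (hR : Rᵀ * R = 1) (hdet : R.det = 1)
    (h : ∀ x ∈ S, Matrix.toEuclideanLin R x - x = c) :
    R = 1 ∧ c = 0 := by
  classical
  obtain ⟨x₀, hx₀⟩ := nonempty_of_measure_ne_zero h0.ne'
  set f : EuclideanSpace ℝ (Fin n) →ₗ[ℝ] EuclideanSpace ℝ (Fin n) := Matrix.toEuclideanLin R with hf
  have hfapply : ∀ (x : EuclideanSpace ℝ (Fin n)) (i : Fin n), f x i = R.mulVec x i :=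
    fun x i => rfl
  have hip : ∀ x y : EuclideanSpace ℝ (Fin n), ⟪x, y⟫ = ∑ i, x i * y i := by
    intro x y
    simp [PiLp.inner_apply, RCLike.inner_apply, conj_trivial]
    exact Finset.sum_congr rfl fun i _ => mul_comm _ _
  -- f preserves inner products
  have hinner : ∀ x y : EuclideanSpace ℝ (Fin n), ⟪f x, f y⟫ = ⟪x, y⟫ := by
    intro x y
    rw [hip, hip]
    have : ∑ i, f x i * f y i = (R *ᵥ x) ⬝ᵥ (R *ᵥ y) := by
      simp only [hfapply]; rfl
    rw [this, dotProduct_mulVec, ← Matrix.mulVec_transpose, Matrix.mulVec_mulVec, hR,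
      Matrix.one_mulVec]
    rfl
  set K : Submodule ℝ (EuclideanSpace ℝ (Fin n)) := LinearMap.ker (f - LinearMap.id) with hKdef
  have hK : ∀ x, x ∈ K ↔ f x = x := by
    intro x
    simp [hKdef, LinearMap.mem_ker, LinearMap.sub_apply, sub_eq_zero]
  have hKtop : K = ⊤ := by
    by_contra hKne
    have hlt : Module.finrank ℝ K < n := by
      have := Submodule.finrank_lt (K := ℝ) hKne
      rwa [finrank_euclideanSpace_fin] at this
    -- first: finrank K ≤ n - 2
    have hfr : Module.finrank ℝ K ≤ n - 2 := by
      by_contra hge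
      have hKn1 : Module.finrank ℝ K = n - 1 := by omega
      have horth : Module.finrank ℝ Kᗮ = 1 := by
        have h1 := Submodule.finrank_add_finrank_orthogonal K
        rw [finrank_euclideanSpace_fin] at h1
        omega
      obtain ⟨v, hv0, hvspan⟩ := finrank_eq_one_iff'.mp horth
      have hw0 : (v : EuclideanSpace ℝ (Fin n)) ≠ 0 := by
        simpa using hv0
      set u : EuclideanSpace ℝ (Fin n) := ‖(v : EuclideanSpace ℝ (Fin n))‖⁻¹ • (v : EuclideanSpace ℝ (Fin n)) with hu
      have hu_mem : u ∈ Kᗮ := Kᗮ.smul_mem _ v.2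
      have hu_norm : ‖u‖ = 1 := norm_smul_inv_norm hw0
      have hu_inner : ⟪u, u⟫ = 1 := by
        rw [real_inner_self_eq_norm_sq, hu_norm]; norm_num
      -- every element of Kᗮ is a multiple of u
      have hmul : ∀ x ∈ Kᗮ, ∃ a : ℝ, x = a • u := by
        intro x hx
        obtain ⟨a, ha⟩ := hvspan ⟨x, hx⟩
        refine ⟨a * ‖(v : EuclideanSpace ℝ (Fin n))‖, ?_⟩
        have := congrArg (Subtype.val) ha
        simp only [Submodule.coe_smul] at this
        rw [← this, hu, smul_smul, mul_assoc,
          mul_inv_cancel₀ (norm_ne_zero_iff.2 hw0), mul_one]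
      -- f u ∈ Kᗮ
      have hfu_mem : f u ∈ Kᗮ := by
        rw [Submodule.mem_orthogonal']
        intro y hy
        have : ⟪f u, f y⟫ = ⟪u, y⟫ := hinner u y
        rw [(hK y).1 hy] at this
        rw [this]
        exact (Submodule.mem_orthogonal' _ _).1 hu_mem y hy
      obtain ⟨α, hα⟩ := hmul _ hfu_mem
      have hα2 : α ^ 2 = 1 := by
        have h1 : ⟪f u, f u⟫ = ⟪u, u⟫ := hinner u u
        rw [hα, real_inner_smul_left, real_inner_smul_right, hu_inner] at h1
        nlinarith [h1]
      have hαcases : α = 1 ∨ α = -1 := by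
        have : (α - 1) * (α + 1) = 0 := by nlinarith
        rcases mul_eq_zero.1 this with h' | h'
        · left; linarith
        · right; linarith
      rcases hαcases with hα1 | hα1
      · -- α = 1 : u ∈ K ∩ Kᗮ, contradiction
        have huK : u ∈ K := by
          rw [hK, hα, hα1, one_smul]
        have : ⟪u, u⟫ = 0 := (Submodule.mem_orthogonal' _ _).1 hu_mem u huK
        rw [hu_inner] at this
        norm_num at this
      · -- α = -1 : R is a reflection, det = -1
        have hfu : f u = -u := by rw [hα, hα1, neg_one_smul]
        set M : Matrix (Fin n) (Fin n) ℝ := 1 - (2:ℝ) • Matrix.vecMulVec u u with hM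
        have huu : (u : Fin n → ℝ) ⬝ᵥ (u : Fin n → ℝ) = 1 := by
          rw [← hu_inner, hip]; rfl
        have hMdet : M.det = -1 := by
          have hM2 : M = 1 + Matrix.replicateCol Unit (fun i => (-2:ℝ) * u i) * Matrix.replicateRow Unit (fun i => u i) := by
            ext i j
            simp only [hM, Matrix.sub_apply, Matrix.add_apply, Matrix.smul_apply, Matrix.mul_apply,
              Matrix.replicateCol_apply, Matrix.replicateRow_apply, Finset.univ_unique, Finset.sum_singleton,
              Matrix.vecMulVec_apply, smul_eq_mul]
            ring
          rw [hM2, Matrix.det_one_add_replicateCol_mul_replicateRow]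
          have hdp : (fun i => u i) ⬝ᵥ (fun i => (-2:ℝ) * u i) = -2 * ((u : Fin n → ℝ) ⬝ᵥ u) := by
            simp only [dotProduct]
            rw [Finset.mul_sum]
            exact Finset.sum_congr rfl fun j _ => by ring
          rw [hdp, huu]
          norm_num
        have hMapply : ∀ (x : EuclideanSpace ℝ (Fin n)) (i : Fin n),
            Matrix.toEuclideanLin M x i = x i - 2 * (∑ j, u j * x j) * u i := by
          intro x i
          show (M *ᵥ x) i = _
          rw [hM, Matrix.sub_mulVec, Matrix.one_mulVec, Pi.sub_apply]
          have hvm : (((2:ℝ) • Matrix.vecMulVec u u) *ᵥ x) i = 2 * (∑ j, u j * x j) * u i := by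
            rw [Matrix.smul_mulVec, Pi.smul_apply, smul_eq_mul]
            have h2 : (Matrix.vecMulVec u u *ᵥ x) i = u i * ∑ j, u j * x j := by
              simp only [Matrix.mulVec, dotProduct, Matrix.vecMulVec_apply]
              rw [Finset.mul_sum]
              exact Finset.sum_congr rfl fun j _ => by ring
            rw [h2]; ring
          rw [hvm]
        have hspan : Submodule.span ℝ ((K : Set (EuclideanSpace ℝ (Fin n))) ∪ {u}) = ⊤ := by
          rw [Submodule.span_union, Submodule.span_eq]
          have h1 : Kᗮ ≤ Submodule.span ℝ {u} := by
            intro x hx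
            obtain ⟨a, ha⟩ := hmul x hx
            rw [ha]
            exact Submodule.smul_mem _ a (Submodule.mem_span_singleton_self u)
          have h2 : K ⊔ Kᗮ = ⊤ := Submodule.sup_orthogonal_of_hasOrthogonalProjection
          rw [eq_top_iff, ← h2]
          exact sup_le_sup le_rfl h1
        have hRM : R = M := by
          apply Matrix.toEuclideanLin.injective
          apply LinearMap.ext_on hspan
          intro x hx
          rcases hx with hx | hx
          · -- x ∈ K
            have hx' : x ∈ K := hx
            have hux : ⟪u, x⟫ = 0 := (Submodule.mem_orthogonal' _ _).1 hu_mem x hx'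
            have hsum : (∑ j, u j * x j) = 0 := by rw [← hip u x]; exact hux
            ext i
            rw [show Matrix.toEuclideanLin R x i = f x i from rfl, (hK x).1 hx',
              hMapply, hsum]
            ring
          · -- x = u
            simp only [Set.mem_singleton_iff] at hx
            subst hx
            ext i
            rw [show Matrix.toEuclideanLin R u i = f u i from rfl, hfu, hMapply]
            have hsum : (∑ j, u j * u j) = 1 := by rw [← hip u u]; exact hu_inner
            rw [hsum]
            show -(u i) = _
            ring
        rw [hRM, hMdet] at hdet
        norm_num at hdet
    -- now measure contradiction
    have hsub : S ⊆ (fun y => x₀ + y) '' (K : Set (EuclideanSpace ℝ (Fin n))) := by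
      intro x hx
      refine ⟨x - x₀, ?_, by show x₀ + (x - x₀) = x; rw [add_comm]; exact sub_add_cancel x x₀⟩
      rw [SetLike.mem_coe, hK, map_sub]
      have h1 : f x - x = c := h x hx
      have h2 : f x₀ - x₀ = c := h x₀ hx₀
      have : f x - f x₀ = x - x₀ := by
        have := h1.trans h2.symm
        linear_combination (norm := abel) this
      exact this
    have hdimK : dimH (K : Set (EuclideanSpace ℝ (Fin n))) = (Module.finrank ℝ ↥K : ℝ≥0∞) := by
      have hiso : Isometry ((↑) : K → EuclideanSpace ℝ (Fin n)) := isometry_subtype_coe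
      have := hiso.dimH_image Set.univ
      rw [Set.image_univ, Subtype.range_coe] at this
      rw [this, Real.dimH_univ_eq_finrank]
    have htrans : Isometry (fun y : EuclideanSpace ℝ (Fin n) => x₀ + y) := by
      apply Isometry.of_dist_eq
      intro a b
      simp [dist_eq_norm]
    have hdimS : dimH S ≤ ((n - 2 : ℕ) : ℝ≥0∞) := by
      calc dimH S ≤ dimH ((fun y => x₀ + y) '' (K : Set (EuclideanSpace ℝ (Fin n)))) :=
            dimH_mono hsub
        _ = dimH (K : Set (EuclideanSpace ℝ (Fin n))) := htrans.dimH_image _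
        _ = (Module.finrank ℝ ↥K : ℝ≥0∞) := hdimK
        _ ≤ ((n - 2 : ℕ) : ℝ≥0∞) := by exact_mod_cast Nat.cast_le.2 hfr
    have hzero : μH[(n : ℝ) - 1] S = 0 := by
      have hd : dimH S < (((n - 1 : ℕ) : ℝ≥0) : ℝ≥0∞) := by
        refine lt_of_le_of_lt hdimS ?_
        rw [show (((n - 1 : ℕ) : ℝ≥0) : ℝ≥0∞) = ((n - 1 : ℕ) : ℝ≥0∞) by simp]
        exact_mod_cast Nat.sub_lt_sub_left (by omega) (by omega)
      have := hausdorffMeasure_of_dimH_lt hd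
      have hcast : (((n - 1 : ℕ) : ℝ≥0) : ℝ) = (n : ℝ) - 1 := by
        rw [NNReal.coe_natCast, Nat.cast_sub (by omega : 1 ≤ n), Nat.cast_one]
      rwa [hcast] at this
    rw [hzero] at h0
    exact lt_irrefl _ h0
  -- conclude
  have hfx : ∀ x, f x = x := fun x => (hK x).1 (hKtop ▸ Submodule.mem_top)
  constructor
  · refine Matrix.ext fun i j => ?_
    have h1 : f (EuclideanSpace.single j 1) i = EuclideanSpace.single j 1 i := by
      rw [hfx]
    rw [hfapply] at h1
    simpa [Matrix.mulVec, dotProduct, EuclideanSpace.single_apply, Matrix.one_apply,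
      mul_ite, Finset.sum_ite_eq', eq_comm] using h1
  · have := h x₀ hx₀
    rw [show Matrix.toEuclideanLin R x₀ = f x₀ from rfl, hfx, sub_self] at this
    exact this.symm
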